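/- Let a be a natural number coprime to 10 and let n ≥ 2. If x ≡ y (mod 10^n) with x ≥ y, then a^x ≡ a^y (mod 10^n). -/
import Mathlib

lemma pow_one_mod' (a m e : ℕ) (h : Nat.Coprime a m) (hd : Nat.totient m ∣ e) :
    a ^ e ≡ 1 [MOD m] := by
  obtain ⟨k, rfl⟩ := hd
  rw [pow_mul]
  calc (a ^ Nat.totient m) ^ k ≡ 1 ^ k [MOD m] :=
        Nat.ModEq.pow k (Nat.ModEq.pow_totient h)
    _ = 1 := one_pow k

theorem stmt6 (a n x y : ℕ) (ha : Nat.Coprime a 10) (hn : 2 ≤ n)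
    (hxy : x ≡ y [MOD 10 ^ n]) (hyx : y ≤ x) :
    a ^ x ≡ a ^ y [MOD 10 ^ n] := by
  have hdvd : 10 ^ n ∣ x - y := (Nat.modEq_iff_dvd' hyx).mp hxy.symm
  set d := x - y with hd
  have hx : x = y + d := by omega
  have ha2 : a.Coprime (2 ^ n) :=
    Nat.Coprime.pow_right _ (Nat.Coprime.coprime_dvd_right (by norm_num) ha)
  have ha5 : a.Coprime (5 ^ n) :=
    Nat.Coprime.pow_right _ (Nat.Coprime.coprime_dvd_right (by norm_num) ha)
  have h10 : (10 : ℕ) ^ n = 2 ^ n * 5 ^ n := by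
    rw [← Nat.mul_pow]
  -- totient (2^n) = 2^(n-1) divides 10^n
  have ht2 : Nat.totient (2 ^ n) ∣ 10 ^ n := by
    rw [Nat.totient_prime_pow Nat.prime_two (by omega : 0 < n), h10]
    exact Dvd.dvd.mul_right (by
      simpa using mul_dvd_mul (pow_dvd_pow 2 (by omega : n - 1 ≤ n)) (by norm_num : (2-1:ℕ) ∣ 1)) _
  have ht5 : Nat.totient (5 ^ n) ∣ 10 ^ n := by
    rw [Nat.totient_prime_pow (by norm_num : Nat.Prime 5) (by omega : 0 < n), h10]
    have h4 : (5 - 1 : ℕ) ∣ 2 ^ n := by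
      have : (4 : ℕ) ∣ 2 ^ n := by
        calc (4 : ℕ) = 2 ^ 2 := by norm_num
          _ ∣ 2 ^ n := pow_dvd_pow 2 hn
      simpa using this
    exact dvd_trans (mul_dvd_mul (pow_dvd_pow 5 (by omega : n - 1 ≤ n)) h4)
      (dvd_of_eq (mul_comm _ _))
  have h2 : a ^ d ≡ 1 [MOD 2 ^ n] := pow_one_mod' a _ d ha2 (ht2.trans hdvd)
  have h5 : a ^ d ≡ 1 [MOD 5 ^ n] := pow_one_mod' a _ d ha5 (ht5.trans hdvd)
  have hcop : Nat.Coprime (2 ^ n) (5 ^ n) :=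
    Nat.Coprime.pow _ _ (by norm_num)
  have h10mod : a ^ d ≡ 1 [MOD 10 ^ n] := by
    rw [h10]
    exact (Nat.modEq_and_modEq_iff_modEq_mul hcop).mp ⟨h2, h5⟩
  calc a ^ x = a ^ y * a ^ d := by rw [hx, pow_add]
    _ ≡ a ^ y * 1 [MOD 10 ^ n] := Nat.ModEq.mul_left _ h10mod
    _ = a ^ y := by ring
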